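/- arXiv:1910.02111 — 5 statements merged into one kernel-verified Lean document; each statement's English description precedes it below -/
import Mathlib

section
/- Let R be a local unique factorization domain with maximal ideal m and fraction field K. Let x, y ∈ m with y an irreducible (prime) element of R. Then the polynomial T^3 + xT + y has no root in K; in particular, being of degree 3, it is irreducible over K. -/
open Polynomial

/-- Let `R` be a local UFD with maximal ideal `m` and fraction field `K`, and let
`x, y ∈ m` with `y` irreducible. Then `T^3 + x*T + y` has no root in `K`, and being of
degree 3 it is irreducible over `K`. -/
theorem cubic_no_root_and_irreducible_of_local_UFD
    (R : Type*) [CommRing R] [IsDomain R] [UniqueFactorizationMonoid R] [IsLocalRing R]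
    (x y : R) (hx : x ∈ IsLocalRing.maximalIdeal R) (hy : y ∈ IsLocalRing.maximalIdeal R)
    (hyirr : Irreducible y) :
    (∀ r : FractionRing R,
        r ^ 3 + algebraMap R (FractionRing R) x * r + algebraMap R (FractionRing R) y ≠ 0) ∧
    Irreducible (X ^ 3 + C (algebraMap R (FractionRing R) x) * X
        + C (algebraMap R (FractionRing R) y)) := by
  set K := FractionRing R
  have hnoroot : ∀ r : K,
      r ^ 3 + algebraMap R K x * r + algebraMap R K y ≠ 0 := by
    intro r hr
    -- r is integral over R
    have hint : IsIntegral R r := by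
      refine ⟨X ^ 3 + C x * X + C y, ?_, ?_⟩
      · monicity!
      · simp only [eval₂_add, eval₂_mul, eval₂_pow, eval₂_X, eval₂_C]
        exact hr
    obtain ⟨t, ht⟩ := IsIntegrallyClosed.isIntegral_iff.mp hint
    subst ht
    have heq : t ^ 3 + x * t + y = 0 := by
      apply IsFractionRing.injective R K
      push_cast [map_add, map_mul, map_pow, map_zero]
      simpa using hr
    have hfac : y = (-t) * (t ^ 2 + x) := by linear_combination heq
    -- in either case, t is a unit
    have htu : IsUnit t := by
      rcases hyirr.isUnit_or_isUnit hfac with h | h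
      · exact (IsUnit.neg_iff t).mp h
      · by_contra htn
        have ht2 : t * t ∈ IsLocalRing.maximalIdeal R :=
          Ideal.mul_mem_right _ _ ((IsLocalRing.mem_maximalIdeal _).mpr (mem_nonunits_iff.mpr htn))
        have : t ^ 2 + x ∈ IsLocalRing.maximalIdeal R := by
          have : t ^ 2 ∈ IsLocalRing.maximalIdeal R := by rwa [pow_two]
          exact Ideal.add_mem _ this hx
        exact mem_nonunits_iff.mp ((IsLocalRing.mem_maximalIdeal _).mp this) h
    -- but then t ∈ m, contradiction
    have h1 : t ^ 2 + x ∈ IsLocalRing.maximalIdeal R := by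
      have hmul : (-t) * (t ^ 2 + x) ∈ IsLocalRing.maximalIdeal R := hfac ▸ hy
      rcases (IsLocalRing.maximalIdeal.isMaximal R).isPrime.mem_or_mem hmul with h | h
      · exact absurd (mem_nonunits_iff.mp ((IsLocalRing.mem_maximalIdeal _).mp h)) (not_not_intro htu.neg)
      · exact h
    have h2 : t * t ∈ IsLocalRing.maximalIdeal R := by
      have := Ideal.sub_mem _ h1 hx
      rwa [add_sub_cancel_right, pow_two] at this
    rcases (IsLocalRing.maximalIdeal.isMaximal R).isPrime.mem_or_mem h2 with h | h <;>
      exact mem_nonunits_iff.mp ((IsLocalRing.mem_maximalIdeal _).mp h) htu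
  refine ⟨hnoroot, ?_⟩
  set p : K[X] := X ^ 3 + C (algebraMap R K x) * X + C (algebraMap R K y) with hp
  have hdeg : p.natDegree = 3 := by
    unfold p
    compute_degree!
  rw [irreducible_iff_roots_eq_zero_of_degree_le_three (by omega) (by omega)]
  rw [Multiset.eq_zero_iff_forall_notMem]
  intro r hr
  have hp0 : p ≠ 0 := fun h => by simp [h] at hdeg
  have hroot := (mem_roots hp0).mp hr
  exact hnoroot r (by simpa [hp, IsRoot] using hroot)
end

section
/- Let R be an integrally closed domain, L/K a finite Galois extension of its fraction field with group G, S the integral closure of R in L, p a prime of R, and q a prime of S lying over p such that q is the unique prime over p and the residue field extension κ(q)/κ(p) is separable. Then κ(q)/κ(p) is a (finite) Galois extension, and the natural map G → Aut(κ(q)/κ(p)) sending σ to the induced map on residue fields is a surjective group homomorphism. -/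
open Polynomial IntermediateField Module

theorem aux_finiteDimensional_of_bounded_degree {k M : Type*} [Field k] [Field M]
    [Algebra k M] [Algebra.IsSeparable k M] (n : ℕ)
    (hn : ∀ z : M, ∃ F : Polynomial k, F.Monic ∧ F.natDegree ≤ n ∧ Polynomial.aeval z F = 0) :
    FiniteDimensional k M := by
  have hint : ∀ z : M, IsIntegral k z := fun z => by
    obtain ⟨F, hm, _, h0⟩ := hn z
    exact ⟨F, hm, by rwa [← aeval_def]⟩
  have hdeg : ∀ z : M, finrank k k⟮z⟯ ≤ n := fun z => by
    obtain ⟨F, hm, hd, h0⟩ := hn z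
    rw [IntermediateField.adjoin.finrank (hint z)]
    exact le_trans (Polynomial.natDegree_le_of_dvd (minpoly.dvd k z h0) hm.ne_zero) hd
  set D : Set ℕ := Set.range (fun z : M => finrank k k⟮z⟯) with hD
  have hbdd : BddAbove D := ⟨n, by rintro _ ⟨z, rfl⟩; exact hdeg z⟩
  have hne : D.Nonempty := ⟨_, ⟨0, rfl⟩⟩
  obtain ⟨z₀, hz₀⟩ := Nat.sSup_mem hne hbdd
  have htop : k⟮z₀⟯ = ⊤ := by
    rw [eq_top_iff]
    intro z _
    set E := IntermediateField.adjoin k ({z₀, z} : Set M) with hE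
    haveI : FiniteDimensional k E :=
      IntermediateField.finiteDimensional_adjoin (fun x _ => hint x)
    haveI : Algebra.IsSeparable k E := Algebra.isSeparable_tower_bot_of_isSeparable k E M
    obtain ⟨w, hw⟩ := Field.exists_primitive_element k E
    have hEw : finrank k E = finrank k k⟮(w : M)⟯ := by
      have h1 : minpoly k (E.val w) = minpoly k w :=
        minpoly.algHom_eq E.val (fun _ _ h => Subtype.ext_iff.mpr h) w
      rw [IntermediateField.adjoin.finrank (hint _), show ((w : M)) = E.val w from rfl, h1,
        ← IntermediateField.adjoin.finrank (IsIntegral.of_finite k w), hw,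
        IntermediateField.finrank_top']
    have hle : k⟮z₀⟯ ≤ E :=
      (IntermediateField.adjoin_simple_le_iff).mpr
        (IntermediateField.subset_adjoin k _ (Set.mem_insert _ _))
    have hz₀' : finrank k k⟮z₀⟯ = sSup D := hz₀
    have h2 : finrank k E ≤ finrank k k⟮z₀⟯ := by
      rw [hEw, hz₀']
      exact le_csSup hbdd ⟨(w : M), rfl⟩
    have := IntermediateField.eq_of_le_of_finrank_le hle h2
    rw [this]
    exact IntermediateField.subset_adjoin k _ (Set.mem_insert_of_mem _ rfl)
  haveI : FiniteDimensional k k⟮z₀⟯ := IntermediateField.adjoin.finiteDimensional (hint z₀)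
  haveI : FiniteDimensional k (⊤ : IntermediateField k M) := htop ▸ inferInstance
  exact (IntermediateField.topEquiv (F := k) (E := M)).toLinearEquiv.finiteDimensional

set_option maxHeartbeats 4000000 in
set_option synthInstance.maxHeartbeats 400000 in
/-- Let `A` be an integrally closed domain, `L/K` a finite Galois extension of its
fraction field with group `G`, `B` the integral closure of `A` in `L`, and `q` a prime
of `B` which is the unique prime lying over a prime `p` of `A`, with separable residue
field extension `κ(q)/κ(p)`.  Then `κ(q)/κ(p)` is a finite Galois extension and the
natural map `G → Aut(κ(q)/κ(p))` is surjective (every automorphism of `κ(q)` over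
`κ(p)` is induced by some `σ ∈ G`). -/
theorem residue_extension_galois_and_surjective_of_unique_prime_over
    (A K L B : Type*) [CommRing A] [IsDomain A] [IsIntegrallyClosed A] [CommRing B]
    [Algebra A B] [Field K] [Field L] [Algebra A K] [IsFractionRing A K] [Algebra B L]
    [Algebra K L] [Algebra A L] [IsScalarTower A B L] [IsScalarTower A K L]
    [IsIntegralClosure B A L] [FiniteDimensional K L] [IsGalois K L]
    (p : Ideal A) (hp : p.IsPrime) (q : Ideal B) (hq : q.IsPrime)
    (hover : q.comap (algebraMap A B) = p)
    (hunique : ∀ q' : Ideal B, q'.IsPrime → q'.comap (algebraMap A B) = p → q' = q) :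
    letI : Algebra (A ⧸ p) (B ⧸ q) :=
      (Ideal.quotientMap q (algebraMap A B) hover.ge).toAlgebra
    letI : FaithfulSMul (A ⧸ p) (B ⧸ q) :=
      (faithfulSMul_iff_algebraMap_injective _ _).mpr
        (Ideal.quotientMap_injective' (H := hover.ge) hover.le)
    letI : Algebra (FractionRing (A ⧸ p)) (FractionRing (B ⧸ q)) :=
      FractionRing.liftAlgebra _ _
    Algebra.IsSeparable (FractionRing (A ⧸ p)) (FractionRing (B ⧸ q)) →
      FiniteDimensional (FractionRing (A ⧸ p)) (FractionRing (B ⧸ q)) ∧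
      IsGalois (FractionRing (A ⧸ p)) (FractionRing (B ⧸ q)) ∧
      ∀ τ : FractionRing (B ⧸ q) ≃ₐ[FractionRing (A ⧸ p)] FractionRing (B ⧸ q),
        ∃ σ : L ≃ₐ[K] L, ∀ b : B,
          τ (algebraMap (B ⧸ q) (FractionRing (B ⧸ q)) (Ideal.Quotient.mk q b)) =
            algebraMap (B ⧸ q) (FractionRing (B ⧸ q))
              (Ideal.Quotient.mk q (galRestrict A K L B σ b)) := by
  haveI := hp; haveI := hq
  haveI : IsDomain B := (IsIntegralClosure.algebraMap_injective B A L).isDomain _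
  letI : Algebra (A ⧸ p) (B ⧸ q) :=
    (Ideal.quotientMap q (algebraMap A B) hover.ge).toAlgebra
  letI : FaithfulSMul (A ⧸ p) (B ⧸ q) :=
    (faithfulSMul_iff_algebraMap_injective _ _).mpr
      (Ideal.quotientMap_injective' (H := hover.ge) hover.le)
  letI : Algebra (FractionRing (A ⧸ p)) (FractionRing (B ⧸ q)) :=
    FractionRing.liftAlgebra _ _
  haveI := FractionRing.isScalarTower_liftAlgebra (A ⧸ p) (FractionRing (B ⧸ q))
  intro hsep
  haveI := hsep
  -- notation
  set M := FractionRing (B ⧸ q) with hM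
  set k := FractionRing (A ⧸ p) with hk
  set ι : B → M := fun b => algebraMap (B ⧸ q) M (Ideal.Quotient.mk q b) with hι
  -- stability of q under the Galois action
  have hstab : ∀ (σ : L ≃ₐ[K] L) (b : B), b ∈ q ↔ galRestrict A K L B σ b ∈ q := by
    intro σ b
    have h1 : (Ideal.comap ((galRestrict A K L B σ : B ≃ₐ[A] B) : B →+* B) q) = q := by
      apply hunique
      · haveI := hq; exact Ideal.comap_isPrime _ q
      · rw [Ideal.comap_comap, ← hover]
        congr 1
        exact RingHom.ext fun a => by simp [AlgEquiv.commutes]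
    constructor
    · intro hb; rw [← h1] at hb; exact hb
    · intro hb; rw [← h1]; exact hb
  -- the characteristic polynomial over A
  set n := Fintype.card (L ≃ₐ[K] L) with hn
  have hpoly : ∀ b : B, ∃ Fa : A[X], Fa.Monic ∧ Fa.natDegree = n ∧
      Fa.map (algebraMap A B) = ∏ σ : L ≃ₐ[K] L, (X - C (galRestrict A K L B σ b)) := by
    intro b
    set PB : B[X] := ∏ σ : L ≃ₐ[K] L, (X - C (galRestrict A K L B σ b)) with hPB
    have hmonic : PB.Monic := monic_prod_of_monic _ _ fun σ _ => monic_X_sub_C _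
    have hdeg : PB.natDegree = n := by
      rw [hn]
      rw [hPB, natDegree_prod _ _ fun σ _ => X_sub_C_ne_zero _]
      simp [natDegree_X_sub_C]
    have hlift : ∀ i, PB.coeff i ∈ Set.range (algebraMap A B) := by
      intro i
      set cL : L := algebraMap B L (PB.coeff i) with hcL
      have hmapPB : PB.map (algebraMap B L) =
          ∏ σ : L ≃ₐ[K] L, (X - C (σ (algebraMap B L b))) := by
        rw [hPB, Polynomial.map_prod]
        refine Finset.prod_congr rfl fun σ _ => ?_
        rw [Polynomial.map_sub, Polynomial.map_X, Polynomial.map_C,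
          algebraMap_galRestrict_apply]
      have hfix : ∀ τ : L ≃ₐ[K] L, τ cL = cL := by
        intro τ
        have h2 : (PB.map (algebraMap B L)).map (τ : L →+* L) = PB.map (algebraMap B L) := by
          rw [hmapPB, Polynomial.map_prod]
          rw [show (fun σ : L ≃ₐ[K] L =>
              Polynomial.map (τ : L →+* L) (X - C (σ (algebraMap B L b))))
            = fun σ : L ≃ₐ[K] L => (X - C ((τ * σ) (algebraMap B L b))) from funext fun σ => by
              rw [Polynomial.map_sub, Polynomial.map_X, Polynomial.map_C]; rfl]
          exact Fintype.prod_equiv (Equiv.mulLeft τ) _ _ fun σ => rfl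
        have := congrArg (fun P => Polynomial.coeff P i) h2
        simpa [Polynomial.coeff_map, hcL] using this
      have hbot : cL ∈ (⊥ : IntermediateField K L) := by
        rw [← IsGalois.fixedField_fixingSubgroup (⊥ : IntermediateField K L)]
        exact fun g => hfix g
      obtain ⟨k₀, hk₀⟩ := IntermediateField.mem_bot.mp hbot
      have hint : IsIntegral A k₀ := by
        have h3 : IsIntegral A cL := by
          rw [hcL]
          exact IsIntegral.algebraMap (IsIntegralClosure.isIntegral A L (PB.coeff i))
        rw [← hk₀] at h3
        exact (isIntegral_algebraMap_iff (algebraMap K L).injective).mp h3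
      obtain ⟨a, ha⟩ := IsIntegrallyClosed.isIntegral_iff.mp hint
      refine ⟨a, IsIntegralClosure.algebraMap_injective B A L ?_⟩
      rw [← IsScalarTower.algebraMap_apply, IsScalarTower.algebraMap_apply A K L, ha, hk₀, hcL]
    obtain ⟨Fa, hmap, hdeg2, hFm⟩ := Polynomial.lifts_and_degree_eq_and_monic
      ((Polynomial.lifts_iff_coeff_lifts PB).mpr hlift) hmonic
    exact ⟨Fa, hFm, by rw [← hdeg, ← Polynomial.natDegree_eq_of_degree_eq hdeg2], hmap⟩
  -- commutation lemmas
  have hABq : ∀ a : A, algebraMap (A ⧸ p) (B ⧸ q) (Ideal.Quotient.mk p a) =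
      Ideal.Quotient.mk q (algebraMap A B a) := fun a =>
    Ideal.quotientMap_mk (H := hover.ge)
  have halg : ∀ a : A, algebraMap (A ⧸ p) M (Ideal.Quotient.mk p a) = ι (algebraMap A B a) := by
    intro a
    rw [IsScalarTower.algebraMap_apply (A ⧸ p) (B ⧸ q) M, hABq]
  have hchain : (algebraMap k M).comp ((algebraMap (A ⧸ p) k).comp (Ideal.Quotient.mk p))
      = ((algebraMap (B ⧸ q) M).comp (Ideal.Quotient.mk q)).comp (algebraMap A B) := by
    ext a
    simp only [RingHom.comp_apply]
    rw [← IsScalarTower.algebraMap_apply (A ⧸ p) k M, halg a]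
  -- residue polynomial over k
  have hkpoly : ∀ b : B, ∃ Fk : k[X], Fk.Monic ∧ Fk.natDegree = n ∧
      Fk.map (algebraMap k M) = ∏ σ : L ≃ₐ[K] L, (X - C (ι (galRestrict A K L B σ b))) := by
    intro b
    obtain ⟨Fa, hFm, hFd, hFmap⟩ := hpoly b
    refine ⟨(Fa.map (Ideal.Quotient.mk p)).map (algebraMap (A ⧸ p) k), ?_, ?_, ?_⟩
    · exact (hFm.map _).map _
    · rw [(hFm.map (Ideal.Quotient.mk p)).natDegree_map, hFm.natDegree_map, hFd]
    · rw [Polynomial.map_map, Polynomial.map_map, RingHom.comp_assoc, hchain,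
        ← Polynomial.map_map, hFmap, Polynomial.map_prod]
      refine Finset.prod_congr rfl fun σ _ => ?_
      rw [Polynomial.map_sub, Polynomial.map_X, Polynomial.map_C]
      rfl
  -- roots
  have hroot : ∀ (b : B) (F : k[X]),
      F.map (algebraMap k M) = (∏ σ : L ≃ₐ[K] L, (X - C (ι (galRestrict A K L B σ b)))) →
      aeval (ι b) F = 0 := by
    intro b F hF
    rw [aeval_def, Polynomial.eval₂_eq_eval_map, hF, Polynomial.eval_prod]
    refine Finset.prod_eq_zero (Finset.mem_univ 1) ?_
    rw [map_one (galRestrict A K L B)]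
    simp
  have hintι : ∀ b : B, IsIntegral k (ι b) := by
    intro b
    obtain ⟨F, hFm, _, hFmap⟩ := hkpoly b
    exact ⟨F, hFm, by rw [← Polynomial.aeval_def]; exact hroot b F hFmap⟩
  -- representation of elements of M
  have hrep : ∀ z : M, ∃ (b : B) (a : A), Ideal.Quotient.mk p a ≠ 0 ∧
      algebraMap (A ⧸ p) M (Ideal.Quotient.mk p a) * z = ι b := by
    have hTint : Algebra.IsIntegral k (Algebra.adjoin k (Set.range ι)) :=
      le_integralClosure_iff_isIntegral.mp <|
        Algebra.adjoin_le_iff.mpr (by rintro _ ⟨b, rfl⟩; exact hintι b)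
    have hTfield : IsField (Algebra.adjoin k (Set.range ι)) :=
      isField_of_isIntegral_of_isField' (R := k) (Field.toIsField k)
    set T := Algebra.adjoin k (Set.range ι) with hT
    have hTall : ∀ z : M, z ∈ T := by
      intro z
      obtain ⟨⟨y, s⟩, hys⟩ := IsLocalization.surj (nonZeroDivisors (B ⧸ q)) z
      obtain ⟨b₁, rfl⟩ := Ideal.Quotient.mk_surjective y
      obtain ⟨b₂, hb₂⟩ := Ideal.Quotient.mk_surjective (s : B ⧸ q)
      have hs_mem : ι b₂ ∈ T := Algebra.subset_adjoin ⟨b₂, rfl⟩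
      have hy_mem : ι b₁ ∈ T := Algebra.subset_adjoin ⟨b₁, rfl⟩
      have hs_ne : (⟨ι b₂, hs_mem⟩ : T) ≠ 0 := by
        intro h
        have h1 : ι b₂ = 0 := congrArg Subtype.val h
        have h2 : Ideal.Quotient.mk q b₂ = 0 :=
          IsFractionRing.injective (B ⧸ q) M (by simpa [hι] using h1)
        rw [hb₂] at h2
        exact nonZeroDivisors.ne_zero s.property h2
      obtain ⟨t, ht⟩ := hTfield.mul_inv_cancel hs_ne
      have htM : ι b₂ * (t : M) = 1 := by
        have := congrArg Subtype.val ht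
        simpa using this
      have h3 : z * ι b₂ = ι b₁ := by simp only [hι]; rw [hb₂]; exact hys
      have hz : z = ι b₁ * (t : M) := by
        calc z = z * (ι b₂ * (t : M)) := by rw [htM, mul_one]
        _ = (z * ι b₂) * t := by ring
        _ = ι b₁ * t := by rw [h3]
      rw [hz]
      exact mul_mem hy_mem (Subtype.property t)
    intro z
    have hz := hTall z
    rw [hT] at hz
    induction hz using Algebra.adjoin_induction with
    | mem x hx =>
      obtain ⟨b, rfl⟩ := hx
      exact ⟨b, 1, by simp, by simp⟩
    | algebraMap c =>
      obtain ⟨⟨a', s⟩, hc⟩ := IsLocalization.surj (nonZeroDivisors (A ⧸ p)) c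
      obtain ⟨a₀, rfl⟩ := Ideal.Quotient.mk_surjective a'
      obtain ⟨s₀, hs₀⟩ := Ideal.Quotient.mk_surjective (s : A ⧸ p)
      refine ⟨algebraMap A B a₀, s₀, ?_, ?_⟩
      · rw [hs₀]; exact nonZeroDivisors.ne_zero s.property
      · have := congrArg (algebraMap k M) hc
        rw [map_mul, ← IsScalarTower.algebraMap_apply (A ⧸ p) k M,
          ← IsScalarTower.algebraMap_apply (A ⧸ p) k M] at this
        rw [hs₀, mul_comm, this, halg]
    | add x y hx hy ihx ihy =>
      obtain ⟨b₁, a₁, ha₁, hb₁⟩ := ihx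
      obtain ⟨b₂, a₂, ha₂, hb₂⟩ := ihy
      refine ⟨algebraMap A B a₂ * b₁ + algebraMap A B a₁ * b₂, a₁ * a₂, ?_, ?_⟩
      · rw [map_mul]; exact mul_ne_zero ha₁ ha₂
      · have e : algebraMap (A ⧸ p) M (Ideal.Quotient.mk p (a₁ * a₂))
            = algebraMap (A ⧸ p) M (Ideal.Quotient.mk p a₁) *
              algebraMap (A ⧸ p) M (Ideal.Quotient.mk p a₂) := by rw [map_mul, map_mul]
        have hiadd : ι (algebraMap A B a₂ * b₁ + algebraMap A B a₁ * b₂)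
            = ι (algebraMap A B a₂) * ι b₁ + ι (algebraMap A B a₁) * ι b₂ := by
          simp only [hι, map_add, map_mul]
        rw [e, hiadd, ← halg a₁, ← halg a₂, ← hb₁, ← hb₂]
        ring
    | mul x y hx hy ihx ihy =>
      obtain ⟨b₁, a₁, ha₁, hb₁⟩ := ihx
      obtain ⟨b₂, a₂, ha₂, hb₂⟩ := ihy
      refine ⟨b₁ * b₂, a₁ * a₂, ?_, ?_⟩
      · rw [map_mul]; exact mul_ne_zero ha₁ ha₂
      · have e : algebraMap (A ⧸ p) M (Ideal.Quotient.mk p (a₁ * a₂))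
            = algebraMap (A ⧸ p) M (Ideal.Quotient.mk p a₁) *
              algebraMap (A ⧸ p) M (Ideal.Quotient.mk p a₂) := by rw [map_mul, map_mul]
        have himul : ι (b₁ * b₂) = ι b₁ * ι b₂ := by simp only [hι, map_mul]
        rw [e, himul, ← hb₁, ← hb₂]
        ring
  -- finite dimensionality
  haveI hfin : FiniteDimensional k M := by
    refine aux_finiteDimensional_of_bounded_degree n (fun z => ?_)
    obtain ⟨b, a, ha, hb⟩ := hrep z
    obtain ⟨F, hFm, hFd, hFmap⟩ := hkpoly b
    have hsk_ne : algebraMap (A ⧸ p) k (Ideal.Quotient.mk p a) ≠ 0 := fun h =>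
      ha (IsFractionRing.injective (A ⧸ p) k (by rw [h, map_zero]))
    have hbz : algebraMap k M (algebraMap (A ⧸ p) k (Ideal.Quotient.mk p a)) * z = ι b := by
      rw [← IsScalarTower.algebraMap_apply (A ⧸ p) k M]
      exact hb
    refine ⟨F.scaleRoots (algebraMap (A ⧸ p) k (Ideal.Quotient.mk p a))⁻¹,
      (monic_scaleRoots_iff _).mpr hFm,
      le_of_eq (by rw [natDegree_scaleRoots, hFd]), ?_⟩
    have h0 : aeval (ι b) F = 0 := hroot b F hFmap
    have h1 := scaleRoots_aeval_eq_zero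
      (r := (algebraMap (A ⧸ p) k (Ideal.Quotient.mk p a))⁻¹) h0
    rwa [← hbz, map_inv₀, ← mul_assoc, inv_mul_cancel₀
      (fun h => hsk_ne ((map_eq_zero_iff _
        (FaithfulSMul.algebraMap_injective k M)).mp h)),
      one_mul] at h1
  -- a generator coming from B
  obtain ⟨θ, hθ⟩ := Field.exists_primitive_element k M
  obtain ⟨b₀, a₀, ha₀, hb₀⟩ := hrep θ
  set x : M := ι b₀ with hx
  have hgen : IntermediateField.adjoin k {x} = ⊤ := by
    rw [eq_top_iff, ← hθ]
    refine IntermediateField.adjoin_simple_le_iff.mpr ?_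
    have hsk : algebraMap (A ⧸ p) M (Ideal.Quotient.mk p a₀)
        = algebraMap k M (algebraMap (A ⧸ p) k (Ideal.Quotient.mk p a₀)) :=
      IsScalarTower.algebraMap_apply (A ⧸ p) k M _
    have hsk_ne : algebraMap (A ⧸ p) k (Ideal.Quotient.mk p a₀) ≠ 0 := fun h =>
      ha₀ (IsFractionRing.injective (A ⧸ p) k (by rw [h, map_zero]))
    have hne : algebraMap k M (algebraMap (A ⧸ p) k (Ideal.Quotient.mk p a₀)) ≠ 0 := fun h =>
      hsk_ne ((map_eq_zero_iff _ (FaithfulSMul.algebraMap_injective k M)).mp h)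
    have hθeq : θ = algebraMap k M (algebraMap (A ⧸ p) k (Ideal.Quotient.mk p a₀))⁻¹ * x := by
      have h5 : algebraMap k M (algebraMap (A ⧸ p) k (Ideal.Quotient.mk p a₀)) * θ = x := by
        rw [← hsk]; exact hb₀
      rw [map_inv₀, ← h5, ← mul_assoc, inv_mul_cancel₀ hne, one_mul]
    rw [hθeq]
    exact mul_mem (k⟮x⟯.algebraMap_mem _) (IntermediateField.mem_adjoin_simple_self k x)
  obtain ⟨F₀, hF₀m, hF₀d, hF₀map⟩ := hkpoly b₀
  have hadj_alg : Algebra.adjoin k {x} = ⊤ := by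
    rw [← IntermediateField.adjoin_simple_toSubalgebra_of_isAlgebraic (hintι b₀).isAlgebraic, hgen]
    rfl
  have hx0 : aeval x F₀ = 0 := hroot b₀ F₀ hF₀map
  haveI hsplit : IsSplittingField k M F₀ := by
    constructor
    · rw [hF₀map]
      exact Splits.prod fun σ _ => Splits.X_sub_C _
    · refine le_antisymm le_top ?_
      rw [← hadj_alg]
      refine Algebra.adjoin_mono ?_
      intro z hz
      rw [Set.mem_singleton_iff] at hz
      subst hz
      exact Polynomial.mem_rootSet.mpr ⟨hF₀m.ne_zero, hx0⟩
  haveI hnormal : Normal k M := Normal.of_isSplittingField F₀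
  refine ⟨hfin, ⟨⟩, ?_⟩
  -- surjectivity
  intro τ
  have hτroot : aeval (τ x) F₀ = 0 := by
    have h1 : aeval (τ x) (minpoly k x) = 0 := by
      rw [← minpoly.algEquiv_eq τ x]
      exact minpoly.aeval k (τ x)
    obtain ⟨c, hc⟩ := minpoly.dvd k x hx0
    rw [hc, map_mul, h1, zero_mul]
  have hτx : ∃ σ : L ≃ₐ[K] L, τ x = ι (galRestrict A K L B σ b₀) := by
    have h2 : (∏ σ : L ≃ₐ[K] L, (τ x - ι (galRestrict A K L B σ b₀))) = 0 := by
      have := hτroot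
      rw [aeval_def, Polynomial.eval₂_eq_eval_map, hF₀map, Polynomial.eval_prod] at this
      simpa using this
    obtain ⟨σ, _, hσ⟩ := Finset.prod_eq_zero_iff.mp h2
    exact ⟨σ, sub_eq_zero.mp hσ⟩
  obtain ⟨σ, hσ⟩ := hτx
  -- the induced automorphism of M
  set φσ : (B ⧸ q) →+* (B ⧸ q) :=
    Ideal.quotientMap q ((galRestrict A K L B σ : B ≃ₐ[A] B) : B →+* B)
      (fun b hb => Ideal.mem_comap.mpr ((hstab σ b).mp hb)) with hφσdef
  have hφσ : ∀ b : B, φσ (Ideal.Quotient.mk q b) =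
      Ideal.Quotient.mk q (galRestrict A K L B σ b) := fun b => Ideal.quotientMap_mk
  have hφσinj : Function.Injective φσ :=
    Ideal.quotientMap_injective' (fun b hb => (hstab σ b).mpr (Ideal.mem_comap.mp hb))
  set ψ : (B ⧸ q) →+* M := (algebraMap (B ⧸ q) M).comp φσ with hψdef
  have hψinj : Function.Injective ψ :=
    (IsFractionRing.injective (B ⧸ q) M).comp hφσinj
  set τσ : M →+* M := IsFractionRing.lift hψinj with hτσdef
  have hτσ : ∀ y : B ⧸ q, τσ (algebraMap (B ⧸ q) M y) = ψ y := fun y =>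
    IsFractionRing.lift_algebraMap hψinj y
  have hτσι : ∀ b : B, τσ (ι b) = ι (galRestrict A K L B σ b) := by
    intro b
    rw [hι]
    simp only
    rw [hτσ, hψdef]
    simp only [RingHom.comp_apply]
    rw [hφσ]
  have hτσA : ∀ y : A ⧸ p, τσ (algebraMap (A ⧸ p) M y) = algebraMap (A ⧸ p) M y := by
    intro y
    obtain ⟨a, rfl⟩ := Ideal.Quotient.mk_surjective y
    rw [halg, hτσι]
    have h6 : galRestrict A K L B σ (algebraMap A B a) = algebraMap A B a :=
      AlgEquiv.commutes _ a
    rw [h6]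
  have hτσk : ∀ c : k, τσ (algebraMap k M c) = algebraMap k M c := by
    intro c
    obtain ⟨⟨a', s⟩, hc⟩ := IsLocalization.surj (nonZeroDivisors (A ⧸ p)) c
    have hs_ne : algebraMap (A ⧸ p) M (s : A ⧸ p) ≠ 0 := by
      have : Function.Injective (algebraMap (A ⧸ p) M) := by
        rw [IsScalarTower.algebraMap_eq (A ⧸ p) k M]
        exact (FaithfulSMul.algebraMap_injective k M).comp (IsFractionRing.injective (A ⧸ p) k)
      intro h
      exact nonZeroDivisors.ne_zero s.property (this (by rw [h, map_zero]))
    have hmain := congrArg (algebraMap k M) hc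
    rw [map_mul, ← IsScalarTower.algebraMap_apply (A ⧸ p) k M,
      ← IsScalarTower.algebraMap_apply (A ⧸ p) k M] at hmain
    have h2 := congrArg τσ hmain
    rw [map_mul, hτσA, hτσA] at h2
    have h3 : τσ (algebraMap k M c) * algebraMap (A ⧸ p) M (s : A ⧸ p)
        = algebraMap k M c * algebraMap (A ⧸ p) M (s : A ⧸ p) := by
      rw [h2, hmain]
    exact mul_right_cancel₀ hs_ne h3
  -- τ agrees with τσ
  have hall : ∀ z : M, τ z = τσ z := by
    intro z
    have hz : z ∈ Algebra.adjoin k ({x} : Set M) := by rw [hadj_alg]; exact Algebra.mem_top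
    induction hz using Algebra.adjoin_induction with
    | mem w hw =>
      rw [Set.mem_singleton_iff] at hw
      subst hw
      rw [hσ, hτσι]
    | algebraMap c => rw [AlgEquiv.commutes, hτσk]
    | add w₁ w₂ h₁ h₂ ih₁ ih₂ =>
      rw [map_add τ, RingHom.map_add τσ, ih₁, ih₂]
    | mul w₁ w₂ h₁ h₂ ih₁ ih₂ =>
      rw [map_mul τ, RingHom.map_mul τσ, ih₁, ih₂]
  exact ⟨σ, fun b => by rw [show τ (algebraMap (B ⧸ q) M (Ideal.Quotient.mk q b)) = τ (ι b)
    from rfl, hall (ι b), hτσι b]⟩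
end

section
/- Let R be a commutative ring, S a commutative R-algebra that is finite and free (or finitely generated projective of constant rank r ≥ 1) as an R-module, and let I be an invertible R-module (i.e., a rank-one finitely generated projective R-module). If I ⊗_R S ≅ S as S-modules, then I^{⊗r} ≅ R as R-modules, where I^{⊗r} is the r-fold tensor power. In particular, if the class of I in Pic(R) is not torsion, then I ⊗_R S is not free over S. -/
open TensorProduct PiTensorProduct

namespace PicAux


variable {R : Type*} [CommRing R]
variable {M : Type*} {N : Type*} [AddCommGroup M] [Module R M]
  [AddCommGroup N] [Module R N]

theorem rTensor_inj (ε : M ⊗[R] N ≃ₗ[R] R) (h : M →ₗ[R] M)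
    (h0 : h.rTensor N = 0) : h = 0 := by
  have key : ∀ (x : M) (q : N ⊗[R] M), h x ⊗ₜ[R] q = (0 : M ⊗[R] (N ⊗[R] M)) := by
    intro x q
    induction q using TensorProduct.induction_on with
    | zero => simp
    | tmul n m =>
        have h1 : h x ⊗ₜ[R] (n ⊗ₜ[R] m)
            = (TensorProduct.assoc R M N M) ((h x ⊗ₜ[R] n) ⊗ₜ[R] m) := rfl
        have h2 : h x ⊗ₜ[R] n = h.rTensor N (x ⊗ₜ[R] n) := rfl
        rw [h1, h2, h0]
        simp
    | add q1 q2 hq1 hq2 => rw [TensorProduct.tmul_add, hq1, hq2, add_zero]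
  set e'' : N ⊗[R] M ≃ₗ[R] R := (TensorProduct.comm R N M).trans ε with he
  ext x
  have : h x = e'' (e''.symm 1) • h x := by rw [e''.apply_symm_apply, one_smul]
  rw [LinearMap.zero_apply, this]
  have h3 : e'' (e''.symm 1) • h x
      = (TensorProduct.rid R M) ((LinearMap.lTensor M e''.toLinearMap)
          (h x ⊗ₜ[R] (e''.symm 1))) := by
    simp
  rw [h3, key x (e''.symm 1)]
  simp

theorem exists_scalar (ε : M ⊗[R] N ≃ₗ[R] R) (g : M →ₗ[R] M) :
    ∃ a : R, g = a • LinearMap.id := by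
  set a : R := ε ((g.rTensor N) (ε.symm 1)) with ha
  refine ⟨a, ?_⟩
  have hF : ∀ z : M ⊗[R] N, g.rTensor N z = a • z := by
    intro z
    have h1 : ε.symm (ε z) = (ε z) • ε.symm 1 := by
      rw [← map_smul, smul_eq_mul, mul_one, ε.symm_apply_apply]
    have h2 : g.rTensor N z = (ε z) • (g.rTensor N (ε.symm 1)) := by
      rw [← map_smul, ← h1, ε.symm_apply_apply]
    apply ε.injective
    rw [h2, map_smul, map_smul, smul_eq_mul, smul_eq_mul, mul_comm, ← ha]
  have h0 : (g - a • LinearMap.id).rTensor N = 0 := by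
    apply TensorProduct.ext'
    intro x n
    have h4 : g x ⊗ₜ[R] n = a • (x ⊗ₜ[R] n) := hF (x ⊗ₜ n)
    rw [LinearMap.rTensor_tmul]
    simp only [LinearMap.sub_apply, LinearMap.smul_apply, LinearMap.id_apply,
      TensorProduct.sub_tmul, TensorProduct.smul_tmul', h4, LinearMap.zero_apply]
    rw [sub_self]
  have := rTensor_inj ε _ h0
  rw [sub_eq_zero] at this
  exact this

theorem smul_id_inj (ε : M ⊗[R] N ≃ₗ[R] R) {a b : R}
    (hab : a • (LinearMap.id : M →ₗ[R] M) = b • LinearMap.id) : a = b := by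
  have h1 : ∀ z : M ⊗[R] N, a • z = b • z := by
    intro z
    induction z using TensorProduct.induction_on with
    | zero => simp
    | tmul x n =>
        have := LinearMap.congr_fun hab x
        simp only [LinearMap.smul_apply, LinearMap.id_apply] at this
        rw [TensorProduct.smul_tmul', TensorProduct.smul_tmul', this]
    | add z1 z2 hz1 hz2 => simp only [smul_add, hz1, hz2]
  have := h1 (ε.symm 1)
  have h2 := congrArg ε this
  rw [map_smul, map_smul, ε.apply_symm_apply, smul_eq_mul, smul_eq_mul,
    mul_one, mul_one] at h2
  exact h2



variable {R : Type*} [CommRing R]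
variable {M : Type*} {N : Type*} [AddCommGroup M] [Module R M]
  [AddCommGroup N] [Module R N]


theorem bij_of_surj (ε : M ⊗[R] N ≃ₗ[R] R) (D : M →ₗ[R] R)
    (hD : Function.Surjective D) : Function.Bijective D := by
  obtain ⟨x₀, hx₀⟩ := hD 1
  set s : R →ₗ[R] M := LinearMap.toSpanSingleton R M x₀ with hs
  obtain ⟨a, ha⟩ := exists_scalar ε (s ∘ₗ D)
  have hDs : ∀ c : R, D (s c) = c := by
    intro c
    simp [hs, LinearMap.toSpanSingleton_apply, map_smul, hx₀]
  have hax : ∀ x : M, s (D x) = a • x := by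
    intro x
    simpa using LinearMap.congr_fun ha x
  have ha1 : a = 1 := by
    have h1 := congrArg D (hax x₀)
    rw [hDs, hx₀, map_smul, hx₀, smul_eq_mul, mul_one] at h1
    exact h1.symm
  have hsd : ∀ x : M, s (D x) = x := by
    intro x
    rw [hax, ha1, one_smul]
  constructor
  · intro x y hxy
    rw [← hsd x, ← hsd y, hxy]
  · exact hD

theorem proj_and_fin (ε : M ⊗[R] N ≃ₗ[R] R) :
    Module.Projective R M ∧ Module.Finite R M := by
  classical
  obtain ⟨T, hT⟩ := TensorProduct.exists_finset (ε.symm 1)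
  let μ : M ≃ₗ[R] M :=
    (TensorProduct.lid R M).symm ≪≫ₗ
      (TensorProduct.congr ε.symm (LinearEquiv.refl R M)) ≪≫ₗ
      (TensorProduct.assoc R M N M) ≪≫ₗ
      (TensorProduct.congr (LinearEquiv.refl R M) (TensorProduct.comm R N M)) ≪≫ₗ
      (TensorProduct.congr (LinearEquiv.refl R M) ε) ≪≫ₗ
      (TensorProduct.rid R M)
  have hμ : ∀ x : M, μ x = ∑ p ∈ T, ε (x ⊗ₜ[R] p.2) • p.1 := by
    intro x
    have h0 : (TensorProduct.lid R M).symm x = (1 : R) ⊗ₜ[R] x := rfl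
    have h1 : (TensorProduct.congr ε.symm (LinearEquiv.refl R M)) ((1 : R) ⊗ₜ[R] x)
        = ∑ p ∈ T, (p.1 ⊗ₜ[R] p.2) ⊗ₜ[R] x := by
      rw [TensorProduct.congr_tmul, LinearEquiv.refl_apply, hT, TensorProduct.sum_tmul]
    show (TensorProduct.rid R M)
        ((TensorProduct.congr (LinearEquiv.refl R M) ε)
          ((TensorProduct.congr (LinearEquiv.refl R M) (TensorProduct.comm R N M))
            ((TensorProduct.assoc R M N M)
              ((TensorProduct.congr ε.symm (LinearEquiv.refl R M))
                ((TensorProduct.lid R M).symm x))))) = _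
    rw [h0, h1, map_sum, map_sum, map_sum, map_sum]
    apply Finset.sum_congr rfl
    intro p _
    rw [TensorProduct.assoc_tmul, TensorProduct.congr_tmul, LinearEquiv.refl_apply,
      TensorProduct.comm_tmul, TensorProduct.congr_tmul, LinearEquiv.refl_apply,
      TensorProduct.rid_tmul]
  obtain ⟨a, ha⟩ := exists_scalar ε μ.toLinearMap
  obtain ⟨b, hb⟩ := exists_scalar ε μ.symm.toLinearMap
  have hab : b * a = 1 := by
    have h2 : μ.symm.toLinearMap ∘ₗ μ.toLinearMap = LinearMap.id := by
      ext x; simp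
    rw [ha, hb] at h2
    have h3 : ∀ x : M, (b * a) • x = x := by
      intro x
      have := LinearMap.congr_fun h2 x
      simp only [LinearMap.coe_comp, Function.comp_apply, LinearMap.smul_apply,
        LinearMap.id_apply] at this
      rw [mul_smul]
      exact this
    refine smul_id_inj ε (a := b * a) (b := 1) ?_
    ext x
    simpa using h3 x
  let G : M →ₗ[R] (T → R) :=
    LinearMap.pi (fun p => ε.toLinearMap ∘ₗ ((TensorProduct.mk R M N).flip (p : M × N).2))
  let H : (T → R) →ₗ[R] M :=
    ∑ p : T, (LinearMap.toSpanSingleton R M (p : M × N).1) ∘ₗ LinearMap.proj p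
  have hHG : ∀ x : M, H (G x) = a • x := by
    intro x
    have h4 : H (G x) = ∑ p : T, ε (x ⊗ₜ[R] (p : M × N).2) • (p : M × N).1 := by
      simp [H, G, LinearMap.sum_apply, LinearMap.toSpanSingleton_apply]
    rw [h4, Finset.sum_coe_sort T (fun p => ε (x ⊗ₜ[R] p.2) • p.1), ← hμ x]
    exact LinearMap.congr_fun ha x
  let H' : (T → R) →ₗ[R] M := b • H
  have hH'G : H' ∘ₗ G = LinearMap.id := by
    ext x
    show b • H (G x) = x
    rw [hHG, smul_smul, hab, one_smul]
  constructor
  · exact Module.Projective.of_split G H' hH'G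
  · refine Module.Finite.of_surjective H' (fun x => ⟨G x, ?_⟩)
    exact LinearMap.congr_fun hH'G x



variable {R : Type*} [CommRing R]
variable {M : Type*} {N : Type*} [AddCommGroup M] [Module R M]
  [AddCommGroup N] [Module R N]

theorem piTensor_inv (ε : M ⊗[R] N ≃ₗ[R] R) (n : ℕ) :
    Nonempty (((⨂[R]^n M) ⊗[R] (⨂[R]^n N)) ≃ₗ[R] R) := by
  induction n with
  | zero =>
      exact ⟨(TensorProduct.congr (PiTensorProduct.isEmptyEquiv (Fin 0))
        (PiTensorProduct.isEmptyEquiv (Fin 0))).trans (TensorProduct.lid R R)⟩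
  | succ n ih =>
      obtain ⟨e⟩ := ih
      let sM : (⨂[R]^(n+1)) M ≃ₗ[R] (⨂[R]^n) M ⊗[R] M :=
        (TensorPower.mulEquiv (R := R) (M := M) (n := n) (m := 1)).symm.trans
          (TensorProduct.congr (LinearEquiv.refl R _)
            (PiTensorProduct.subsingletonEquiv (0 : Fin 1)))
      let sN : (⨂[R]^(n+1)) N ≃ₗ[R] (⨂[R]^n) N ⊗[R] N :=
        (TensorPower.mulEquiv (R := R) (M := N) (n := n) (m := 1)).symm.trans
          (TensorProduct.congr (LinearEquiv.refl R _)
            (PiTensorProduct.subsingletonEquiv (0 : Fin 1)))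
      exact ⟨(TensorProduct.congr sM sN).trans
        ((TensorProduct.tensorTensorTensorComm R _ M _ N).trans
          ((TensorProduct.congr e ε).trans (TensorProduct.lid R R)))⟩



variable {R : Type*} [CommRing R]
variable {M : Type*} {N : Type*} [AddCommGroup M] [Module R M]
  [AddCommGroup N] [Module R N]


theorem sym_loc {Rm : Type*} [CommRing Rm] [Algebra R Rm]
    {Mm : Type*} [AddCommGroup Mm] [Module R Mm] [Module Rm Mm]
    [IsScalarTower R Rm Mm] (m : Ideal R) [m.IsMaximal]
    [IsLocalization.AtPrime Rm m]
    (mkL : M →ₗ[R] Mm) [IsLocalizedModule m.primeCompl mkL]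
    (ε : M ⊗[R] N ≃ₗ[R] R) (φ ψ : M →ₗ[R] R) (x y : M) :
    algebraMap R Rm (φ x * ψ y - φ y * ψ x) = 0 := by
  classical
  haveI : IsLocalRing Rm := IsLocalization.AtPrime.isLocalRing Rm m
  haveI hproj : Module.Projective R M := (proj_and_fin ε).1
  haveI hfin : Module.Finite R M := (proj_and_fin ε).2
  haveI hfp : Module.FinitePresentation R M := Module.finitePresentation_of_projective R M
  haveI : Module.Finite Rm Mm := Module.Finite.of_isLocalizedModule m.primeCompl mkL
  haveI : Module.Projective Rm Mm := Module.projective_of_isLocalizedModule m.primeCompl mkL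
  haveI : Module.FinitePresentation Rm Mm := Module.finitePresentation_of_projective Rm Mm
  haveI : Module.Free Rm Mm := Module.free_of_flat_of_isLocalRing
  let κ := Module.Free.ChooseBasisIndex Rm Mm
  let B : Module.Basis κ Rm Mm := Module.Free.chooseBasis Rm Mm
  let loc : (M →ₗ[R] R) → (Mm →ₗ[Rm] Rm) := fun χ =>
    (IsLocalizedModule.map m.primeCompl mkL (Algebra.linearMap R Rm)
      χ).extendScalarsOfIsLocalization m.primeCompl Rm
  have hloc : ∀ (χ : M →ₗ[R] R) (z : M), loc χ (mkL z) = algebraMap R Rm (χ z) := by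
    intro χ z
    have h := IsLocalizedModule.map_apply m.primeCompl mkL (Algebra.linearMap R Rm) χ z
    simpa [loc] using h
  have hcard : Fintype.card κ ≤ 1 := by
    by_contra hc
    push_neg at hc
    obtain ⟨i₀, i₁, hne⟩ := Fintype.exists_pair_of_one_lt_card hc
    let g₀ : Mm →ₗ[Rm] Mm := LinearMap.toSpanSingleton Rm Mm (B i₀) ∘ₗ (B.coord i₀)
    obtain ⟨⟨h, s⟩, hs⟩ := IsLocalizedModule.surj m.primeCompl
      (IsLocalizedModule.map m.primeCompl mkL mkL) (g₀.restrictScalars R)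
    obtain ⟨a, haa⟩ := exists_scalar ε h
    have heq : ∀ u : Mm, (s : R) • g₀ u = a • u := by
      intro u
      have h1 := LinearMap.congr_fun hs u
      rw [haa] at h1
      have h2 : IsLocalizedModule.map m.primeCompl mkL mkL (a • LinearMap.id)
          = a • (LinearMap.id : Mm →ₗ[R] Mm) := by
        rw [map_smul, IsLocalizedModule.map_id]
      rw [h2] at h1
      simpa [Submonoid.smul_def] using h1
    have hrepr : ∀ (c : Rm) (i j : κ), B.repr (c • B i) j
        = if i = j then c else 0 := by
      intro c i j
      rw [map_smul, Module.Basis.repr_self, Finsupp.smul_apply, Finsupp.single_apply]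
      split <;> simp
    have ha0 : algebraMap R Rm a = 0 := by
      have h1 := heq (B i₁)
      have h2 : g₀ (B i₁) = 0 := by
        have : B.coord i₀ (B i₁) = 0 := by
          rw [Module.Basis.coord_apply, Module.Basis.repr_self, Finsupp.single_apply, if_neg hne.symm]
        simp [g₀, this]
      rw [h2, smul_zero] at h1
      have h4 : (algebraMap R Rm a) • B i₁ = 0 := by
        rw [algebraMap_smul, ← h1]
      have h6 : B.repr ((algebraMap R Rm a) • B i₁) i₁ = B.repr (0 : Mm) i₁ := by
        rw [h4]
      rw [hrepr, if_pos rfl] at h6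
      simpa using h6
    have has : algebraMap R Rm (s : R) = 0 := by
      have h1 := heq (B i₀)
      have h2 : g₀ (B i₀) = B i₀ := by
        have : B.coord i₀ (B i₀) = 1 := by
          rw [Module.Basis.coord_apply, Module.Basis.repr_self, Finsupp.single_apply, if_pos rfl]
        simp [g₀, this]
      rw [h2] at h1
      have h4 : (algebraMap R Rm (s : R)) • B i₀ = (algebraMap R Rm a) • B i₀ := by
        rw [algebraMap_smul, algebraMap_smul]; exact h1
      have h6 : B.repr ((algebraMap R Rm (s : R)) • B i₀) i₀
          = B.repr ((algebraMap R Rm a) • B i₀) i₀ := by rw [h4]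
      rw [hrepr, hrepr, if_pos rfl, if_pos rfl] at h6
      rw [h6, ha0]
    have := IsLocalization.map_units Rm s
    rw [has] at this
    exact not_isUnit_zero this
  have hgen : ∃ g : Mm, ∀ u : Mm, ∃ c : Rm, u = c • g := by
    rcases Nat.le_one_iff_eq_zero_or_eq_one.mp hcard with h0 | h1
    · haveI : IsEmpty κ := Fintype.card_eq_zero_iff.mp h0
      refine ⟨0, fun u => ⟨0, ?_⟩⟩
      have hu : u = 0 := by
        apply B.repr.injective
        exact Subsingleton.elim _ _
      rw [hu, zero_smul]
    · obtain ⟨i₀, hi₀⟩ := Fintype.card_eq_one_iff.mp h1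
      refine ⟨B i₀, fun u => ⟨B.repr u i₀, ?_⟩⟩
      conv_lhs => rw [← B.sum_repr u]
      rw [Finset.sum_eq_single_of_mem i₀ (Finset.mem_univ _)
        (fun j _ hj => absurd (hi₀ j) hj)]
  obtain ⟨g, hg⟩ := hgen
  obtain ⟨cx, hcx⟩ := hg (mkL x)
  obtain ⟨cy, hcy⟩ := hg (mkL y)
  have e1 : algebraMap R Rm (φ x) = cx * loc φ g := by
    rw [← hloc, hcx, map_smul, smul_eq_mul]
  have e2 : algebraMap R Rm (ψ y) = cy * loc ψ g := by
    rw [← hloc, hcy, map_smul, smul_eq_mul]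
  have e3 : algebraMap R Rm (φ y) = cy * loc φ g := by
    rw [← hloc, hcy, map_smul, smul_eq_mul]
  have e4 : algebraMap R Rm (ψ x) = cx * loc ψ g := by
    rw [← hloc, hcx, map_smul, smul_eq_mul]
  rw [map_sub, _root_.map_mul, _root_.map_mul, e1, e2, e3, e4]
  ring

theorem sym_of_inv (ε : M ⊗[R] N ≃ₗ[R] R) (φ ψ : M →ₗ[R] R) (x y : M) :
    φ x * ψ y = φ y * ψ x := by
  rw [← sub_eq_zero]
  by_contra hne
  have hker : LinearMap.ker (LinearMap.toSpanSingleton R R (φ x * ψ y - φ y * ψ x)) ≠ ⊤ := by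
    intro h
    have h1 : (1 : R) ∈ LinearMap.ker
        (LinearMap.toSpanSingleton R R (φ x * ψ y - φ y * ψ x)) := h ▸ Submodule.mem_top
    rw [LinearMap.mem_ker, LinearMap.toSpanSingleton_apply, one_smul] at h1
    exact hne h1
  obtain ⟨m, hmax, hle⟩ := Ideal.exists_le_maximal _ hker
  haveI := hmax
  have h0 := sym_loc (Rm := Localization.AtPrime m)
    (Mm := LocalizedModule m.primeCompl M) m
    (LocalizedModule.mkLinearMap m.primeCompl M) ε φ ψ x y
  rw [IsLocalization.map_eq_zero_iff m.primeCompl] at h0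
  obtain ⟨s, hs⟩ := h0
  refine s.2 (hle ?_)
  rw [LinearMap.mem_ker, LinearMap.toSpanSingleton_apply, smul_eq_mul]
  exact hs



variable {R : Type*} [CommRing R]

theorem det_eq_zero_of_sym {r : ℕ} (A : Matrix (Fin r) (Fin r) R) (j1 j2 : Fin r)
    (hne : j1 ≠ j2)
    (hsymA : ∀ p q : Fin r, A j1 p * A j2 q = A j1 q * A j2 p) :
    A.det = 0 := by
  classical
  rw [← Matrix.det_transpose, Matrix.det_apply]
  refine Finset.sum_ninvolution (fun σ => σ * Equiv.swap j1 j2) ?_ ?_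
    (fun σ => Finset.mem_univ _) ?_
  · intro σ
    have hswap1 : (σ * Equiv.swap j1 j2) j1 = σ j2 := by
      simp [Equiv.Perm.mul_apply]
    have hswap2 : (σ * Equiv.swap j1 j2) j2 = σ j1 := by
      simp [Equiv.Perm.mul_apply]
    have hswap3 : ∀ i, i ≠ j1 → i ≠ j2 → (σ * Equiv.swap j1 j2) i = σ i := by
      intro i h1 h2
      simp [Equiv.Perm.mul_apply, Equiv.swap_apply_of_ne_of_ne h1 h2]
    have hmem : j2 ∈ (Finset.univ.erase j1 : Finset (Fin r)) :=
      Finset.mem_erase.mpr ⟨hne.symm, Finset.mem_univ _⟩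
    have hprod : ∀ τ : Equiv.Perm (Fin r),
        (∏ i, A.transpose (τ i) i)
          = A j1 (τ j1) * (A j2 (τ j2) * ∏ i ∈ (Finset.univ.erase j1).erase j2,
              A i (τ i)) := by
      intro τ
      have e1 : ∏ i, A.transpose (τ i) i = ∏ i, A i (τ i) := by
        apply Finset.prod_congr rfl
        intro i _
        rw [Matrix.transpose_apply]
      rw [e1, ← Finset.mul_prod_erase Finset.univ _ (Finset.mem_univ j1),
        ← Finset.mul_prod_erase _ _ hmem]
    have hPP : (∏ i, A.transpose ((σ * Equiv.swap j1 j2) i) i)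
        = ∏ i, A.transpose (σ i) i := by
      rw [hprod, hprod, hswap1, hswap2]
      have e2 : ∏ i ∈ (Finset.univ.erase j1).erase j2, A i ((σ * Equiv.swap j1 j2) i)
          = ∏ i ∈ (Finset.univ.erase j1).erase j2, A i (σ i) := by
        apply Finset.prod_congr rfl
        intro i hi
        have h2 := Finset.mem_erase.mp hi
        have h1 := Finset.mem_erase.mp h2.2
        rw [hswap3 i h1.1 h2.1]
      rw [e2, ← mul_assoc, ← mul_assoc, hsymA (σ j2) (σ j1)]
    have hsign : Equiv.Perm.sign (σ * Equiv.swap j1 j2) = - Equiv.Perm.sign σ := by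
      rw [Equiv.Perm.sign_mul, Equiv.Perm.sign_swap hne, mul_neg, mul_one]
    rw [hPP, hsign, Units.smul_def, Units.smul_def, Units.val_neg, neg_zsmul,
      add_neg_cancel]
  · intro σ _
    intro hcontra
    have hcontra' : σ * Equiv.swap j1 j2 = σ := hcontra
    have h1 : Equiv.swap j1 j2 = 1 := by
      have := mul_left_cancel (a := σ)
        (show σ * Equiv.swap j1 j2 = σ * 1 by rw [hcontra', mul_one])
      exact this
    have h2 : (Equiv.swap j1 j2) j1 = j1 := by rw [h1]; rfl
    rw [Equiv.swap_apply_left] at h2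
    exact hne h2.symm
  · intro σ
    show σ * Equiv.swap j1 j2 * Equiv.swap j1 j2 = σ
    rw [mul_assoc, Equiv.swap_mul_self, mul_one]

theorem det_aux {I : Type*} [AddCommGroup I] [Module R I] {r : ℕ}
    (hsym : ∀ (φ ψ : I →ₗ[R] R) (x y : I), φ x * ψ y = φ y * ψ x)
    (Φ : (Fin r → I) ≃ₗ[R] (Fin r → R)) :
    ∃ D : (⨂[R]^r I) →ₗ[R] R, Function.Surjective D := by
  classical
  set f : Fin r → Fin r → (I →ₗ[R] R) := fun i j =>
    LinearMap.proj i ∘ₗ Φ.toLinearMap ∘ₗ LinearMap.single R (fun _ => I) j with hf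
  set w : Fin r → Fin r → I := fun k i => Φ.symm (Pi.single i 1) k with hw
  have hΦ : ∀ (v : Fin r → I) (i : Fin r), Φ v i = ∑ k, f i k (v k) := by
    intro v i
    have hv : v = ∑ k, Pi.single k (v k) := (Finset.univ_sum_single v).symm
    calc Φ v i = Φ (∑ k, Pi.single k (v k)) i := by rw [← hv]
    _ = (∑ k, Φ (Pi.single k (v k))) i := by rw [map_sum]
    _ = ∑ k, Φ (Pi.single k (v k)) i := by rw [Finset.sum_apply]
    _ = ∑ k, f i k (v k) := rfl
  have hR1 : ∀ i j : Fin r, (∑ k, f i k (w k j)) = if i = j then 1 else 0 := by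
    intro i j
    have h1 : Φ (fun k => w k j) = Pi.single j 1 := Φ.apply_symm_apply _
    have h2 := hΦ (fun k => w k j) i
    rw [h1] at h2
    rw [← h2, Pi.single_apply]
  set dml : MultilinearMap R (fun _ : Fin r => I) R :=
    (Matrix.detRowAlternating (R := R) (n := Fin r)).toMultilinearMap.compLinearMap
      (fun j => LinearMap.pi (fun i => f i j)) with hdml
  have hdml_apply : ∀ v : Fin r → I,
      dml v = Matrix.detRowAlternating (fun j i => f i j (v j)) := by
    intro v
    rw [hdml]
    rfl
  -- the key identity
  have hkey : ∑ τ : Equiv.Perm (Fin r),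
      Equiv.Perm.sign τ • dml (fun m => w m (τ m)) = 1 := by
    -- start from identity matrix
    have h1 : Matrix.detRowAlternating
        (fun j i => (∑ k, f i k (w k j) : R)) = 1 := by
      have hNmat : (Matrix.of fun j i => (∑ k, f i k (w k j) : R))
          = (1 : Matrix (Fin r) (Fin r) R) := by
        ext j i
        rw [Matrix.of_apply, hR1 i j, Matrix.one_apply]
        exact if_congr eq_comm rfl rfl
      have := congrArg Matrix.det hNmat
      rw [Matrix.det_one] at this
      exact this
    have h2 : (fun (j : Fin r) (i : Fin r) => (∑ k, f i k (w k j) : R))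
        = fun (j : Fin r) => ∑ k, (fun i => f i k (w k j)) := by
      funext j i
      rw [Finset.sum_apply]
    rw [h2] at h1
    have h3 := (Matrix.detRowAlternating (R := R)
      (n := Fin r)).toMultilinearMap.map_sum
      (g := fun j k => (fun i => f i k (w k j)))
    have h4 : Matrix.detRowAlternating
          (fun (j : Fin r) => ∑ k, (fun i => f i k (w k j)))
        = ∑ κ : Fin r → Fin r,
            Matrix.detRowAlternating (fun (j : Fin r) (i : Fin r) => f i (κ j) (w (κ j) j)) :=
      h3
    rw [h4] at h1
    -- h1 : ∑ κ : Fin r → Fin r, detRowAlternating (fun j => fun i => f i (κ j) (w (κ j) j)) = 1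
    set F : (Fin r → Fin r) → R := fun κ =>
      Matrix.detRowAlternating (fun j i => f i (κ j) (w (κ j) j)) with hF
    have hFvanish : ∀ κ : Fin r → Fin r, ¬ Function.Bijective κ → F κ = 0 := by
      intro κ hκ
      have hninj : ¬ Function.Injective κ := by
        intro hinj
        exact hκ (Finite.injective_iff_bijective.mp hinj)
      obtain ⟨j1, j2, hval, hnej⟩ := Function.not_injective_iff.mp hninj
      refine det_eq_zero_of_sym (Matrix.of fun j i => f i (κ j) (w (κ j) j)) j1 j2 hnej ?_
      intro p q
      simp only [Matrix.of_apply]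
      rw [hval]
      rw [hsym (f p (κ j2)) (f q (κ j2)) (w (κ j2) j1) (w (κ j2) j2)]
      ring
    have hsplit : ∑ κ : Fin r → Fin r, F κ = ∑ σ : Equiv.Perm (Fin r), F ⇑σ := by
      rw [← Finset.sum_filter_of_ne
        (p := fun κ => Function.Bijective κ)
        (fun κ _ hFκ => by
          by_contra hbij
          exact hFκ (hFvanish κ hbij))]
      refine (Finset.sum_bij (fun (σ : Equiv.Perm (Fin r)) _ => ⇑σ) ?_ ?_ ?_ ?_).symm
      · intro σ _
        rw [Finset.mem_filter]
        exact ⟨Finset.mem_univ _, σ.bijective⟩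
      · intro σ1 _ σ2 _ hcoe
        exact Equiv.coe_fn_injective hcoe
      · intro κ hκ
        rw [Finset.mem_filter] at hκ
        exact ⟨Equiv.ofBijective κ hκ.2, Finset.mem_univ _, rfl⟩
      · intro σ _
        rfl
    rw [hsplit] at h1
    -- now each bijective term
    have hterm : ∀ σ : Equiv.Perm (Fin r),
        F ⇑σ = Equiv.Perm.sign σ • dml (fun m => w m (σ.symm m)) := by
      intro σ
      have hρ : (fun (j : Fin r) (i : Fin r) => f i (σ j) (w (σ j) j))
          = (fun m i => f i m (w m (σ.symm m))) ∘ ⇑σ := by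
        funext j i
        simp only [Function.comp_apply, Equiv.symm_apply_apply]
      rw [hF]
      show Matrix.detRowAlternating (fun j i => f i (σ j) (w (σ j) j)) = _
      rw [hρ, AlternatingMap.map_perm, hdml_apply]
    rw [Finset.sum_congr rfl (fun σ _ => hterm σ)] at h1
    rw [← h1]
    refine (Finset.sum_equiv (Equiv.inv (Equiv.Perm (Fin r)))
      (fun σ => by simp) ?_).symm
    intro σ _
    have h5 : Equiv.Perm.sign σ = Equiv.Perm.sign σ⁻¹ := (Equiv.Perm.sign_inv σ).symm
    rw [show Equiv.inv (Equiv.Perm (Fin r)) σ = σ⁻¹ from rfl, ← h5]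
    rfl
  -- build D and Δ
  set D : (⨂[R]^r I) →ₗ[R] R := PiTensorProduct.lift dml with hD
  set Δ : ⨂[R]^r I := ∑ τ : Equiv.Perm (Fin r),
    ((Equiv.Perm.sign τ : ℤ)) • tprod R (fun m => w m (τ m)) with hΔ
  have hDΔ : D Δ = 1 := by
    rw [hΔ, map_sum]
    rw [← hkey]
    apply Finset.sum_congr rfl
    intro τ _
    rw [map_zsmul, hD, PiTensorProduct.lift.tprod, Units.smul_def]
  refine ⟨D, fun z => ⟨z • Δ, ?_⟩⟩
  rw [map_smul, hDΔ, smul_eq_mul, mul_one]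


end PicAux

/-- Let `S` be a finite free (rank `r ≥ 1`) algebra over `R`, and let `I` be an
invertible `R`-module (witnessed by an inverse `J` with `I ⊗ J ≅ R`).  If the base
change of `I` to `S` is free, i.e. `S ⊗[R] I ≅ S` as `S`-modules, then `I^{⊗ r} ≅ R`.
In particular a nontorsion element of `Pic R` does not base change to a free module. -/
theorem tensor_power_trivial_of_baseChange_free
    (R : Type*) [CommRing R] (S : Type*) [CommRing S] [Algebra R S]
    [Module.Free R S] [Module.Finite R S]
    (r : ℕ) (hr : 1 ≤ r) (hrank : Module.finrank R S = r)
    (I : Type*) [AddCommGroup I] [Module R I]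
    (J : Type*) [AddCommGroup J] [Module R J]
    (hinv : Nonempty ((I ⊗[R] J) ≃ₗ[R] R))
    (hfree : Nonempty ((S ⊗[R] I) ≃ₗ[S] S)) :
    Nonempty ((⨂[R]^r I) ≃ₗ[R] R) := by
  classical
  rcases subsingleton_or_nontrivial R with hR | hR
  · haveI : Subsingleton ((⨂[R]^r I)) := Module.subsingleton R _
    exact ⟨LinearEquiv.ofLinear 0 0 (Subsingleton.elim _ _) (Subsingleton.elim _ _)⟩
  obtain ⟨e⟩ := hinv
  obtain ⟨t⟩ := hfree
  let b : Module.Basis (Fin r) R S := (Module.finBasis R S).reindex (finCongr hrank)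
  let A1 : I ⊗[R] (Fin r → R) ≃ₗ[R] (Fin r → I) :=
    (TensorProduct.piRight R R I (fun _ : Fin r => R)).trans
      (LinearEquiv.piCongrRight (fun _ => TensorProduct.rid R I))
  let Φ : (Fin r → I) ≃ₗ[R] (Fin r → R) :=
    A1.symm.trans ((TensorProduct.congr (LinearEquiv.refl R I) b.equivFun.symm).trans
      ((TensorProduct.comm R I S).trans ((t.restrictScalars R).trans b.equivFun)))
  have hsym : ∀ (φ ψ : I →ₗ[R] R) (x y : I), φ x * ψ y = φ y * ψ x :=
    fun φ ψ x y => PicAux.sym_of_inv e φ ψ x y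
  obtain ⟨D, hD⟩ := PicAux.det_aux hsym Φ
  obtain ⟨εP⟩ := PicAux.piTensor_inv e r
  exact ⟨LinearEquiv.ofBijective D (PicAux.bij_of_surj εP D hD)⟩
end

section
/- Let R be a commutative ring, a ∈ R, and n ≥ 1 an integer such that n is invertible in R. Then the R-algebra S = R[T]/(T^n − a) is étale over R after inverting a; that is, R[1/a] → S[1/a] is a finite étale (equivalently, finite, flat, and unramified) ring map. -/
universe v

open Polynomial

/-- The Kummer algebra `R[T]/(T^n - a)`. -/
noncomputable abbrev kummerAlg (R : Type*) [CommRing R] (a : R) (n : ℕ) : Type _ :=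
  R[X] ⧸ Ideal.span {(X : R[X]) ^ n - C a}

/-- The structure map `R → R[T]/(T^n - a)`. -/
noncomputable def kummerAlgMk (R : Type*) [CommRing R] (a : R) (n : ℕ) :
    R →+* kummerAlg R a n :=
  (Ideal.Quotient.mk (Ideal.span {(X : R[X]) ^ n - C a})).comp (C : R →+* R[X])

theorem adjoinRoot_formallyEtale {A : Type v} [CommRing A] (p : A[X])
    (h' : IsUnit (aeval (AdjoinRoot.root p) (derivative p))) :
    Algebra.FormallyEtale A (AdjoinRoot p) := by
  rw [Algebra.FormallyEtale.iff_comp_bijective]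
  intro B _ _ I hI
  constructor
  · intro g₁ g₂ hg
    apply AdjoinRoot.algHom_ext
    set r := AdjoinRoot.root p with hr
    set d := g₁ r - g₂ r with hdd
    have hdI : d ∈ I := by
      have h1 : Ideal.Quotient.mk I (g₁ r) = Ideal.Quotient.mk I (g₂ r) :=
        DFunLike.congr_fun hg r
      rw [hdd, ← Ideal.Quotient.eq_zero_iff_mem, map_sub, h1, sub_self]
    have hd2 : d ^ 2 = 0 := by
      rw [← Ideal.mem_bot, ← hI]; exact Ideal.pow_mem_pow hdI 2
    have h₁ : aeval (g₁ r) p = 0 := by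
      rw [aeval_algHom_apply, AdjoinRoot.aeval_eq, AdjoinRoot.mk_self, map_zero]
    have h₂ : aeval (g₂ r) p = 0 := by
      rw [aeval_algHom_apply, AdjoinRoot.aeval_eq, AdjoinRoot.mk_self, map_zero]
    have key := Polynomial.eval_add_of_sq_eq_zero (p.map (algebraMap A B)) (g₂ r) d hd2
    rw [derivative_map, eval_map_algebraMap, eval_map_algebraMap, eval_map_algebraMap] at key
    have hsum : g₂ r + d = g₁ r := by rw [hdd]; ring
    rw [hsum, h₁, h₂, zero_add] at key
    have hu : IsUnit (aeval (g₂ r) (derivative p)) := by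
      have := h'.map g₂
      rwa [← aeval_algHom_apply] at this
    have hd0 : d = 0 := (hu.mul_right_eq_zero).mp key.symm
    rw [hdd] at hd0
    exact sub_eq_zero.mp hd0
  · intro f0
    set r := AdjoinRoot.root p with hr
    obtain ⟨x, hx⟩ := Ideal.Quotient.mk_surjective (f0 r)
    have hmk : ∀ q : A[X], Ideal.Quotient.mk I (aeval x q) = aeval (f0 r) q := by
      intro q
      have h1 : Ideal.Quotient.mk I (aeval x q)
          = aeval (Ideal.Quotient.mkₐ A I x) q :=
        (aeval_algHom_apply (Ideal.Quotient.mkₐ A I) x q).symm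
      rw [h1, show (Ideal.Quotient.mkₐ A I x : B ⧸ I) = f0 r from hx]
    have hpx : aeval x p ∈ I := by
      rw [← Ideal.Quotient.eq_zero_iff_mem, hmk p, aeval_algHom_apply,
        AdjoinRoot.aeval_eq, AdjoinRoot.mk_self, map_zero]
    have hux : IsUnit (aeval x (derivative p)) := by
      rw [← IsNilpotent.isUnit_quotient_mk_iff (⟨2, hI⟩ : IsNilpotent I),
        hmk (derivative p), aeval_algHom_apply]
      exact h'.map f0
    set ε : B := -(↑hux.unit⁻¹ * aeval x p) with hε
    have hεI : ε ∈ I := by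
      rw [hε]; exact I.neg_mem (I.mul_mem_left _ hpx)
    have hε2 : ε ^ 2 = 0 := by
      rw [← Ideal.mem_bot, ← hI]; exact Ideal.pow_mem_pow hεI 2
    have hroot : aeval (x + ε) p = 0 := by
      have key := Polynomial.eval_add_of_sq_eq_zero (p.map (algebraMap A B)) x ε hε2
      rw [derivative_map, eval_map_algebraMap, eval_map_algebraMap, eval_map_algebraMap] at key
      have hone : aeval x (derivative p) * ↑hux.unit⁻¹ = 1 := hux.mul_val_inv
      calc aeval (x + ε) p = aeval x p + aeval x (derivative p) * ε := key
        _ = aeval x p - (aeval x (derivative p) * ↑hux.unit⁻¹) * aeval x p := by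
            rw [hε]; ring
        _ = 0 := by rw [hone, one_mul, sub_self]
    refine ⟨AdjoinRoot.liftAlgHom p (Algebra.ofId A B) (x + ε) hroot, ?_⟩
    apply AdjoinRoot.algHom_ext
    show Ideal.Quotient.mkₐ A I (AdjoinRoot.liftAlgHom p (Algebra.ofId A B) (x + ε) hroot r) = f0 r
    rw [hr]; erw [AdjoinRoot.liftAlgHom_root]
    show Ideal.Quotient.mk I (x + ε) = f0 r
    rw [map_add, hx, Ideal.Quotient.eq_zero_iff_mem.mpr hεI, add_zero]

/-- Let `R` be a commutative ring, `a ∈ R`, and `n ≥ 1` with `n` invertible in `R`.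
Then `S = R[T]/(T^n - a)` is étale over `R` after inverting `a`: the induced map
`R[1/a] → S[1/a]` is finite and étale (equivalently, finite, flat, and unramified). -/
theorem kummer_algebra_etale_away_from_branch_divisor
    (R : Type*) [CommRing R] (a : R) (n : ℕ) (hn : 1 ≤ n) (hinv : IsUnit (n : R))
    (Ra : Type v) [CommRing Ra] [Algebra R Ra] [IsLocalization.Away a Ra]
    (Sa : Type v) [CommRing Sa] [Algebra (kummerAlg R a n) Sa]
    [IsLocalization.Away (kummerAlgMk R a n a) Sa] :
    letI f : Ra →+* Sa := IsLocalization.Away.map Ra Sa (kummerAlgMk R a n) a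
    letI : Algebra Ra Sa := f.toAlgebra
    Module.Finite Ra Sa ∧ Algebra.Etale Ra Sa := by
  letI f : Ra →+* Sa := IsLocalization.Away.map Ra Sa (kummerAlgMk R a n) a
  letI : Algebra Ra Sa := f.toAlgebra
  show Module.Finite Ra Sa ∧ Algebra.Etale Ra Sa
  have hn0 : n ≠ 0 := by omega
  -- Set up notation
  set p : R[X] := (X : R[X]) ^ n - C a with hp
  let S : Type _ := AdjoinRoot p
  let t : S := AdjoinRoot.root p
  -- the given algebra structure on Sa
  letI : Algebra S Sa := (inferInstance : Algebra (kummerAlg R a n) Sa)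
  have hta : t ^ n = algebraMap R S a := by
    have h0 : aeval t p = 0 := by
      rw [AdjoinRoot.aeval_eq, AdjoinRoot.mk_self]
    have h1 : t ^ n - algebraMap R S a = 0 := by
      simpa [hp, map_sub, map_pow, aeval_X, aeval_C] using h0
    exact sub_eq_zero.mp h1
  have hfc : ∀ x : R, f (algebraMap R Ra x) = algebraMap S Sa (kummerAlgMk R a n x) :=
    fun x => IsLocalization.map_eq _ x
  -- the Kummer polynomial over Ra
  set q : Ra[X] := (X : Ra[X]) ^ n - C (algebraMap R Ra a) with hq
  let T : Type v := AdjoinRoot q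
  let r : T := AdjoinRoot.root q
  have hqmonic : q.Monic := monic_X_pow_sub_C _ hn0
  have hra : r ^ n = algebraMap Ra T (algebraMap R Ra a) := by
    have h0 : aeval r q = 0 := by
      rw [AdjoinRoot.aeval_eq, AdjoinRoot.mk_self]
    have h1 : r ^ n - algebraMap Ra T (algebraMap R Ra a) = 0 := by
      simpa [hq, map_sub, map_pow, aeval_X, aeval_C] using h0
    exact sub_eq_zero.mp h1
  have haRa : IsUnit (algebraMap R Ra a) := IsLocalization.Away.algebraMap_isUnit a
  have hrn1 : IsUnit (r ^ (n - 1)) := by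
    apply isUnit_of_mul_isUnit_right (x := r)
    have hmul : r * r ^ (n - 1) = r ^ n := by
      rw [← pow_succ']; congr 1; omega
    rw [hmul, hra]
    exact haRa.map _
  have hq' : IsUnit (aeval r (derivative q)) := by
    have hd : derivative q = C (n : Ra) * X ^ (n - 1) := by
      rw [hq, derivative_sub, derivative_C, sub_zero, derivative_X_pow]
    rw [hd, map_mul, aeval_C, map_pow, aeval_X]
    have hnRa : IsUnit ((n : Ra)) := by
      have := hinv.map (algebraMap R Ra)
      rwa [map_natCast] at this
    exact (hnRa.map (algebraMap Ra T)).mul hrn1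
  haveI hTet : Algebra.FormallyEtale Ra T := adjoinRoot_formallyEtale q hq'
  haveI hTfin : Module.Finite Ra T :=
    Module.Finite.of_basis (AdjoinRoot.powerBasis' hqmonic).basis
  haveI hTfp : Algebra.FinitePresentation Ra T := AdjoinRoot.finitePresentation q
  -- forward map
  have hs : (algebraMap S Sa t) ^ n = algebraMap Ra Sa (algebraMap R Ra a) := by
    rw [← map_pow, hta]
    exact (hfc a).symm
  have hsroot : aeval (algebraMap S Sa t) q = 0 := by
    simp only [hq, map_sub, map_pow, aeval_X, aeval_C, hs, sub_self]
  let φ : T →ₐ[Ra] Sa := AdjoinRoot.liftAlgHom q (Algebra.ofId Ra Sa) (algebraMap S Sa t) hsroot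
  have hφroot : φ (AdjoinRoot.root q) = algebraMap S Sa t :=
    AdjoinRoot.lift_root hsroot
  -- backward map
  have hρ0 : p.eval₂ ((algebraMap Ra T).comp (algebraMap R Ra)) r = 0 := by
    rw [hp, eval₂_sub, eval₂_pow, eval₂_X, eval₂_C, RingHom.comp_apply, hra, sub_self]
  let ρ : S →+* T := AdjoinRoot.lift ((algebraMap Ra T).comp (algebraMap R Ra)) r hρ0
  have hρa : IsUnit (ρ (kummerAlgMk R a n a)) := by
    rw [show kummerAlgMk R a n a = AdjoinRoot.of p a from rfl, AdjoinRoot.lift_of,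
      RingHom.comp_apply]
    exact haRa.map (algebraMap Ra T)
  let ψ : Sa →+* T := IsLocalization.Away.lift (kummerAlgMk R a n a) hρa
  have hψS : ∀ z : S, ψ (algebraMap S Sa z) = ρ z := fun z =>
    @IsLocalization.Away.lift_eq S _ Sa _ this T _ (kummerAlgMk R a n a) ‹_› ρ hρa z
  have hψRa : ψ.comp f = algebraMap Ra T := by
    apply IsLocalization.ringHom_ext (Submonoid.powers a)
    ext x
    simp only [RingHom.comp_apply, hfc x, hψS]
    rw [show kummerAlgMk R a n x = AdjoinRoot.of p x from rfl, hψS, AdjoinRoot.lift_of]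
    rfl
  let ψₐ : Sa →ₐ[Ra] T :=
    { ψ with commutes' := fun c => DFunLike.congr_fun hψRa c }
  have h1 : (ψₐ.comp φ) = AlgHom.id Ra T := by
    apply AdjoinRoot.algHom_ext
    show ψ (φ (AdjoinRoot.root q)) = AdjoinRoot.root q
    rw [hφroot, hψS]
    exact AdjoinRoot.lift_root hρ0
  have h2 : (φ.toRingHom.comp ψ) = RingHom.id Sa := by
    apply IsLocalization.ringHom_ext (Submonoid.powers (kummerAlgMk R a n a))
    apply Ideal.Quotient.ringHom_ext
    apply Polynomial.ringHom_ext
    · intro c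
      show φ (ψ (algebraMap S Sa (AdjoinRoot.of p c))) = algebraMap S Sa (AdjoinRoot.of p c)
      rw [hψS, AdjoinRoot.lift_of, RingHom.comp_apply]
      rw [show φ ((algebraMap Ra T) (algebraMap R Ra c)) = algebraMap Ra Sa (algebraMap R Ra c)
        from φ.commutes _]
      exact hfc c
    · show φ (ψ (algebraMap S Sa t)) = algebraMap S Sa t
      rw [hψS, show ρ t = r from AdjoinRoot.lift_root hρ0]
      exact hφroot
  let e : T ≃ₐ[Ra] Sa :=
    AlgEquiv.ofAlgHom φ ψₐ (AlgHom.ext fun x => DFunLike.congr_fun h2 x) h1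
  haveI : Module.Finite Ra Sa := Module.Finite.equiv e.toLinearEquiv
  haveI : Algebra.FormallyEtale Ra Sa := Algebra.FormallyEtale.of_equiv e
  haveI : Algebra.FinitePresentation Ra Sa := Algebra.FinitePresentation.equiv e
  exact ⟨inferInstance, ⟨inferInstance, inferInstance⟩⟩
end

section
/- Let A = ℤ[u, v, w, x, y, z], set Δ₂ = wx − uz and Δ₃ = uy − vx, let q ≥ 1, and let l, m, n ≥ 0 with l + m + n = q − 1. Then u^l · v^m · w^n · Δ₂^{q−1} · Δ₃^{q−1} ≡ (−1)^{n + (q−1−m)} · C(q−1, q−1−n) · C(q−1, m) · u^{q−1} v^{q−1} w^{q−1} · x^{l+q−1} · y^m · z^n modulo the ideal (u^q, v^q, w^q). -/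
open MvPolynomial

/-- In `ℤ[u,v,w,x,y,z]` with `Δ₂ = wx - uz` and `Δ₃ = uy - vx`, if `l + m + n = q - 1`
then `u^l v^m w^n Δ₂^{q-1} Δ₃^{q-1} ≡
(-1)^{n+(q-1-m)} C(q-1, q-1-n) C(q-1, m) u^{q-1} v^{q-1} w^{q-1} x^{l+q-1} y^m z^n`
modulo `(u^q, v^q, w^q)`. -/
theorem segre_cone_congruence
    (q l m n : ℕ) (hq : 1 ≤ q) (hlmn : l + m + n = q - 1) :
    letI u : MvPolynomial (Fin 6) ℤ := X 0
    letI v : MvPolynomial (Fin 6) ℤ := X 1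
    letI w : MvPolynomial (Fin 6) ℤ := X 2
    letI x : MvPolynomial (Fin 6) ℤ := X 3
    letI y : MvPolynomial (Fin 6) ℤ := X 4
    letI z : MvPolynomial (Fin 6) ℤ := X 5
    u ^ l * v ^ m * w ^ n * (w * x - u * z) ^ (q - 1) * (u * y - v * x) ^ (q - 1) -
        (-1) ^ (n + (q - 1 - m)) * ((q - 1).choose (q - 1 - n) : MvPolynomial (Fin 6) ℤ) *
          ((q - 1).choose m : MvPolynomial (Fin 6) ℤ) *
          u ^ (q - 1) * v ^ (q - 1) * w ^ (q - 1) * x ^ (l + (q - 1)) * y ^ m * z ^ n ∈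
      Ideal.span {u ^ q, v ^ q, w ^ q} := by
  set u : MvPolynomial (Fin 6) ℤ := X 0 with hu0
  set v : MvPolynomial (Fin 6) ℤ := X 1 with hv0
  set w : MvPolynomial (Fin 6) ℤ := X 2 with hw0
  set x : MvPolynomial (Fin 6) ℤ := X 3 with hx0
  set y : MvPolynomial (Fin 6) ℤ := X 4 with hy0
  set z : MvPolynomial (Fin 6) ℤ := X 5 with hz0
  set I := Ideal.span {u ^ q, v ^ q, w ^ q} with hI
  have hu : u ^ q ∈ I := Ideal.subset_span (by simp)
  have hv : v ^ q ∈ I := Ideal.subset_span (by simp)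
  have hw : w ^ q ∈ I := Ideal.subset_span (by simp)
  have hmem : ∀ (e1 e2 e3 : ℕ) (r : MvPolynomial (Fin 6) ℤ),
      q ≤ e1 ∨ q ≤ e2 ∨ q ≤ e3 → u ^ e1 * v ^ e2 * w ^ e3 * r ∈ I := by
    intro e1 e2 e3 r h
    rcases h with h | h | h
    · have he : u ^ e1 = u ^ q * u ^ (e1 - q) := by rw [← pow_add]; congr 1; omega
      rw [he]
      exact I.mul_mem_right _ (I.mul_mem_right _ (I.mul_mem_right _
        (I.mul_mem_right _ hu)))
    · have he : v ^ e2 = v ^ q * v ^ (e2 - q) := by rw [← pow_add]; congr 1; omega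
      rw [he, show u ^ e1 * (v ^ q * v ^ (e2 - q)) * w ^ e3 * r =
        v ^ q * (v ^ (e2 - q) * u ^ e1 * w ^ e3 * r) by ring]
      exact I.mul_mem_right _ hv
    · have he : w ^ e3 = w ^ q * w ^ (e3 - q) := by rw [← pow_add]; congr 1; omega
      rw [he, show u ^ e1 * v ^ e2 * (w ^ q * w ^ (e3 - q)) * r =
        w ^ q * (w ^ (e3 - q) * u ^ e1 * v ^ e2 * r) by ring]
      exact I.mul_mem_right _ hw
  set p := q - 1 with hp
  set F : ℕ × ℕ → MvPolynomial (Fin 6) ℤ := fun ac =>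
    (-1) ^ (ac.1 + p) * (-1) ^ (ac.2 + p) * (p.choose ac.1 : MvPolynomial (Fin 6) ℤ) *
      (p.choose ac.2 : MvPolynomial (Fin 6) ℤ) *
      (u ^ (l + (p - ac.1) + ac.2) * v ^ (m + (p - ac.2)) * w ^ (n + ac.1) *
        x ^ (ac.1 + (p - ac.2)) * y ^ ac.2 * z ^ (p - ac.1)) with hF
  have key : u ^ l * v ^ m * w ^ n * (w * x - u * z) ^ p * (u * y - v * x) ^ p =
      ∑ ac ∈ Finset.range (p + 1) ×ˢ Finset.range (p + 1), F ac := by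
    rw [sub_pow (w * x) (u * z) p, sub_pow (u * y) (v * x) p]
    rw [Finset.sum_product]
    rw [show ∀ (A B : MvPolynomial (Fin 6) ℤ),
      u ^ l * v ^ m * w ^ n * A * B = (u ^ l * v ^ m * w ^ n) * (A * B)
      from fun A B => by ring]
    rw [Finset.sum_mul_sum, Finset.mul_sum]
    refine Finset.sum_congr rfl fun a ha => ?_
    rw [Finset.mul_sum]
    refine Finset.sum_congr rfl fun c hc => ?_
    simp only [hF]
    ring
  rw [key]
  have hk : (p - n, m) ∈ Finset.range (p + 1) ×ˢ Finset.range (p + 1) := by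
    simp [Finset.mem_product]; omega
  rw [← Finset.add_sum_erase _ F hk]
  have hFk : F (p - n, m) =
      (-1) ^ (n + (p - m)) * (p.choose (p - n) : MvPolynomial (Fin 6) ℤ) *
        (p.choose m : MvPolynomial (Fin 6) ℤ) *
        u ^ p * v ^ p * w ^ p * x ^ (l + p) * y ^ m * z ^ n := by
    simp only [hF]
    rw [show p - (p - n) = n by omega, show l + n + m = p by omega,
      show m + (p - m) = p by omega, show n + (p - n) = p by omega,
      show (p - n) + (p - m) = l + p by omega]
    rw [show ((-1 : MvPolynomial (Fin 6) ℤ)) ^ (p - n + p) * (-1) ^ (m + p) =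
      (-1) ^ (n + (p - m)) from ?_]
    · ring
    · rw [← pow_add, neg_one_pow_eq_pow_mod_two, neg_one_pow_eq_pow_mod_two (n := n + (p - m))]
      congr 1
      omega
  rw [hFk, add_sub_assoc]
  rw [show (-1) ^ (n + (p - m)) * (p.choose (p - n) : MvPolynomial (Fin 6) ℤ) *
        (p.choose m : MvPolynomial (Fin 6) ℤ) *
        u ^ p * v ^ p * w ^ p * x ^ (l + p) * y ^ m * z ^ n +
      ((∑ ac ∈ (Finset.range (p + 1) ×ˢ Finset.range (p + 1)).erase (p - n, m), F ac) -
        (-1) ^ (n + (p - m)) * (p.choose (p - n) : MvPolynomial (Fin 6) ℤ) *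
        (p.choose m : MvPolynomial (Fin 6) ℤ) *
        u ^ p * v ^ p * w ^ p * x ^ (l + p) * y ^ m * z ^ n) =
      ∑ ac ∈ (Finset.range (p + 1) ×ˢ Finset.range (p + 1)).erase (p - n, m), F ac by ring]
  refine Ideal.sum_mem _ fun ac hac => ?_
  obtain ⟨a, c⟩ := ac
  rw [Finset.mem_erase, Finset.mem_product, Finset.mem_range, Finset.mem_range] at hac
  obtain ⟨hne, ha, hc⟩ := hac
  have hF' : F (a, c) = u ^ (l + (p - a) + c) * v ^ (m + (p - c)) * w ^ (n + a) *
      ((-1) ^ (a + p) * (-1) ^ (c + p) * (p.choose a : MvPolynomial (Fin 6) ℤ) *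
        (p.choose c : MvPolynomial (Fin 6) ℤ) * (x ^ (a + (p - c)) * y ^ c * z ^ (p - a))) := by
    simp only [hF]; ring
  rw [hF']
  refine hmem _ _ _ _ ?_
  have hne' : a ≠ p - n ∨ c ≠ m := by
    by_contra h
    push_neg at h
    exact hne (by rw [h.1, h.2])
  omega
end
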